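/- Vanishing of intermediate-index terms (Lemma 2.2). Fix an even integer n = 2q with q ≥ 1, indices k ∈ {0,…,n−1} and m ∈ {0,…,n−1} with m ∉ {0, q−1, q, n−1}. Then for every f ∈ C_0(0,1): sup_{x∈[0,1]} | ∫_{Γ_r} z_k(x,ρ) ( ∫_0^1 f(ξ) u_m(ξ,ρ) dξ ) dρ | → 0 as r → ∞ (r ranging over all positive reals). -/

import Mathlib

noncomputable section

open MeasureTheory Filter Topology

namespace Equi

/-- `ε_k = exp(2πik/n)`. -/
def eps (n : ℕ) (k : ℤ) : ℂ := Complex.exp (2 * Real.pi * Complex.I * k / n)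

/-- `y_k(x,ρ) = exp(iρ ε_k x)`. -/
def yf (n : ℕ) (k : ℤ) (x : ℝ) (ρ : ℂ) : ℂ := Complex.exp (Complex.I * ρ * eps n k * x)

/-- The fundamental system `z_k`. -/
def zf (n q : ℕ) (k : Fin n) (x : ℝ) (ρ : ℂ) : ℂ :=
  if (k : ℕ) < q then yf n ((k : ℕ) : ℤ) x ρ else yf n ((k : ℕ) : ℤ) (x - 1) ρ

/-- The functions `u_m(ξ,ρ)`. -/
def uf (n q : ℕ) (m : Fin n) (ξ : ℝ) (ρ : ℂ) : ℂ :=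
  if (m : ℕ) < q then yf n ((m : ℕ) : ℤ) (1 - ξ) ρ else yf n ((m : ℕ) : ℤ) (-ξ) ρ

/-- Integral over the circular arc `Γ_r = {r e^{iφ} : 0 ≤ φ ≤ 2π/n}`. -/
def contour (n : ℕ) (r : ℝ) (F : ℂ → ℂ) : ℂ :=
  ∫ φ in (0:ℝ)..(2 * Real.pi / n),
    F ((r : ℂ) * Complex.exp (Complex.I * φ)) * (Complex.I * r * Complex.exp (Complex.I * φ))

/-- Supremum of `‖F‖` over a subset of `ℝ`. -/
def supOn (s : Set ℝ) (F : ℝ → ℂ) : ℝ := ⨆ x : s, ‖F x.val‖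

open Real

lemma eps_eq (n : ℕ) (k : ℤ) :
    eps n k = Complex.exp (((2 * Real.pi * k / n : ℝ) : ℂ) * Complex.I) := by
  unfold eps; congr 1; push_cast; ring

lemma norm_yf (n : ℕ) (m : ℤ) (t r φ : ℝ) :
    ‖yf n m t ((r:ℂ) * Complex.exp (Complex.I * φ))‖
      = Real.exp (-(r * t * Real.sin (φ + 2 * Real.pi * m / n))) := by
  have h1 : Complex.I * ((r:ℂ) * Complex.exp (Complex.I * φ)) * eps n m * t
      = (r:ℂ) * t * (Complex.exp (((φ + 2 * Real.pi * m / n : ℝ):ℂ) * Complex.I) * Complex.I) := by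
    rw [eps_eq n m, Complex.ofReal_add, add_mul, Complex.exp_add]
    ring_nf
  rw [yf, h1, Complex.norm_exp]
  congr 1
  simp only [Complex.mul_re, Complex.mul_im, Complex.I_re, Complex.I_im, Complex.ofReal_re,
    Complex.ofReal_im, Complex.exp_ofReal_mul_I_re, Complex.exp_ofReal_mul_I_im]
  ring

lemma sin_ge (a θ : ℝ) (ha : 0 < a) (ha2 : a ≤ π/2) (h1 : a ≤ θ) (h2 : θ ≤ π - a) :
    Real.sin a ≤ Real.sin θ := by
  have hmem : a ∈ Set.Icc (-(π/2)) (π/2) := ⟨by linarith, ha2⟩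
  rcases le_or_gt θ (π/2) with h | h
  · exact Real.strictMonoOn_sin.monotoneOn hmem ⟨by linarith, h⟩ h1
  · rw [← Real.sin_pi_sub θ]
    exact Real.strictMonoOn_sin.monotoneOn hmem ⟨by linarith, by linarith⟩ (by linarith)

lemma zf_bound (n q : ℕ) (hn : n = 2*q) (hq : 1 ≤ q) (k : Fin n) (x : ℝ)
    (hx : x ∈ Set.Icc (0:ℝ) 1) (r φ : ℝ) (hr : 0 ≤ r)
    (hφ : φ ∈ Set.Icc (0:ℝ) (2*Real.pi/n)) :
    ‖zf n q k x ((r:ℂ) * Complex.exp (Complex.I*φ))‖ ≤ 1 := by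
  have hn0 : 0 < (n:ℝ) := by
    have : 0 < n := by omega
    exact_mod_cast this
  have ha : 0 < 2*π/n := by positivity
  have haq : (q:ℝ) * (2*π/n) = π := by
    subst hn; push_cast; field_simp
  have han : (n:ℝ) * (2*π/n) = 2*π := by field_simp
  have hK0 : (0:ℝ) ≤ ((k:ℕ):ℝ) := Nat.cast_nonneg _
  rw [zf]
  split_ifs with h
  · rw [norm_yf, Real.exp_le_one_iff]
    push_cast
    have hk1 : ((k:ℕ):ℝ) + 1 ≤ q := by exact_mod_cast Nat.succ_le_of_lt h
    have e : 2*π*((k:ℕ):ℝ)/n = ((k:ℕ):ℝ)*(2*π/n) := by ring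
    have hsin : 0 ≤ Real.sin (φ + 2*π*((k:ℕ):ℝ)/n) := by
      apply Real.sin_nonneg_of_nonneg_of_le_pi
      · have : 0 ≤ 2*π*((k:ℕ):ℝ)/n := by positivity
        linarith [hφ.1]
      · rw [e]
        nlinarith [hφ.2, mul_nonneg (sub_nonneg.2 hk1) ha.le]
    nlinarith [mul_nonneg (mul_nonneg hr hx.1) hsin]
  · rw [norm_yf, Real.exp_le_one_iff]
    push_cast
    have hkq : (q:ℝ) ≤ ((k:ℕ):ℝ) := by exact_mod_cast Nat.le_of_not_lt h
    have hkn : ((k:ℕ):ℝ) + 1 ≤ n := by exact_mod_cast k.isLt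
    have e : 2*π*((k:ℕ):ℝ)/n = ((k:ℕ):ℝ)*(2*π/n) := by ring
    have hsin : Real.sin (φ + 2*π*((k:ℕ):ℝ)/n) ≤ 0 := by
      have h0 : 0 ≤ Real.sin ((φ + 2*π*((k:ℕ):ℝ)/n) - π) := by
        apply Real.sin_nonneg_of_nonneg_of_le_pi
        · rw [e]
          nlinarith [hφ.1, mul_nonneg (sub_nonneg.2 hkq) ha.le]
        · rw [e]
          nlinarith [hφ.2, mul_nonneg (sub_nonneg.2 hkn) ha.le]
      rw [Real.sin_sub_pi] at h0
      linarith
    nlinarith [mul_nonneg hr (mul_nonneg (by linarith [hx.2] : (0:ℝ) ≤ 1 - x) (by linarith : (0:ℝ) ≤ -Real.sin (φ + 2*π*((k:ℕ):ℝ)/n)))]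

lemma uf_bound_lt (n q : ℕ) (hn : n = 2*q) (m : Fin n) (hmlt : (m:ℕ) < q)
    (hm1 : 1 ≤ (m:ℕ)) (hm2 : (m:ℕ) + 2 ≤ q) (ξ : ℝ) (hξ : ξ ∈ Set.Icc (0:ℝ) 1)
    (r φ : ℝ) (hr : 0 ≤ r) (hφ : φ ∈ Set.Icc (0:ℝ) (2*Real.pi/n)) :
    ‖uf n q m ξ ((r:ℂ) * Complex.exp (Complex.I*φ))‖
      ≤ Real.exp (r * Real.sin (2*π/n) * (ξ - 1)) := by
  have hq3 : 3 ≤ q := by omega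
  have hn0 : 0 < (n:ℝ) := by
    have : 0 < n := by omega
    exact_mod_cast this
  have ha : 0 < 2*π/n := by positivity
  have haq : (q:ℝ) * (2*π/n) = π := by subst hn; push_cast; field_simp
  have hq3' : (3:ℝ) ≤ q := by exact_mod_cast hq3
  have ha2 : 2*π/n ≤ π/2 := by nlinarith [Real.pi_pos]
  have hm1' : (1:ℝ) ≤ ((m:ℕ):ℝ) := by exact_mod_cast hm1
  have hm2' : ((m:ℕ):ℝ) + 2 ≤ q := by exact_mod_cast hm2
  have e : 2*π*((m:ℕ):ℝ)/n = ((m:ℕ):ℝ)*(2*π/n) := by ring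
  have hsin : Real.sin (2*π/n) ≤ Real.sin (φ + 2*π*((m:ℕ):ℝ)/n) := by
    apply sin_ge _ _ ha ha2
    · rw [e]; nlinarith [hφ.1, mul_nonneg (sub_nonneg.2 hm1') ha.le]
    · rw [e]; nlinarith [hφ.2, mul_nonneg (sub_nonneg.2 (by linarith : ((m:ℕ):ℝ) + 2 ≤ (q:ℝ))) ha.le]
  rw [uf, if_pos hmlt, norm_yf, Real.exp_le_exp]
  push_cast
  nlinarith [mul_nonneg (mul_nonneg hr (by linarith [hξ.2] : (0:ℝ) ≤ 1 - ξ))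
    (sub_nonneg.2 hsin)]

lemma uf_bound_ge (n q : ℕ) (hn : n = 2*q) (m : Fin n) (hmge : ¬ (m:ℕ) < q)
    (hm1 : q + 1 ≤ (m:ℕ)) (hm2 : (m:ℕ) + 2 ≤ n) (ξ : ℝ) (hξ : ξ ∈ Set.Icc (0:ℝ) 1)
    (r φ : ℝ) (hr : 0 ≤ r) (hφ : φ ∈ Set.Icc (0:ℝ) (2*Real.pi/n)) :
    ‖uf n q m ξ ((r:ℂ) * Complex.exp (Complex.I*φ))‖
      ≤ Real.exp (r * Real.sin (2*π/n) * ((1 - ξ) - 1)) := by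
  have hq3 : 3 ≤ q := by omega
  have hn0 : 0 < (n:ℝ) := by
    have : 0 < n := by omega
    exact_mod_cast this
  have ha : 0 < 2*π/n := by positivity
  have haq : (q:ℝ) * (2*π/n) = π := by subst hn; push_cast; field_simp
  have hq3' : (3:ℝ) ≤ q := by exact_mod_cast hq3
  have ha2 : 2*π/n ≤ π/2 := by nlinarith [Real.pi_pos]
  have hm1' : (q:ℝ) + 1 ≤ ((m:ℕ):ℝ) := by exact_mod_cast hm1
  have hm2' : ((m:ℕ):ℝ) + 2 ≤ n := by exact_mod_cast hm2
  have hnq : (n:ℝ) = 2*q := by exact_mod_cast hn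
  have e : 2*π*((m:ℕ):ℝ)/n = ((m:ℕ):ℝ)*(2*π/n) := by ring
  have hsin : Real.sin (φ + 2*π*((m:ℕ):ℝ)/n) ≤ -Real.sin (2*π/n) := by
    have h0 : Real.sin (2*π/n) ≤ Real.sin ((φ + 2*π*((m:ℕ):ℝ)/n) - π) := by
      apply sin_ge _ _ ha ha2
      · rw [e]; nlinarith [hφ.1, mul_nonneg (sub_nonneg.2 (by linarith : (q:ℝ) + 1 ≤ ((m:ℕ):ℝ))) ha.le]
      · rw [e]; nlinarith [hφ.2, mul_nonneg (sub_nonneg.2 (by linarith : ((m:ℕ):ℝ) + 2 ≤ (n:ℝ))) ha.le,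
          mul_pos (by norm_num : (0:ℝ) < 2) ha]
    rw [Real.sin_sub_pi] at h0
    linarith
  rw [uf, if_neg hmge, norm_yf, Real.exp_le_exp]
  push_cast
  nlinarith [mul_nonneg (mul_nonneg hr hξ.1)
    (by linarith : (0:ℝ) ≤ -Real.sin (2*π/n) - Real.sin (φ + 2*π*((m:ℕ):ℝ)/n))]


lemma contour_norm_le (n q : ℕ) (hn0 : 0 < n) (k m : Fin n) (f : ℝ → ℂ)
    (hfcont : ContinuousOn f (Set.Icc 0 1)) (c : ℝ) (τ : ℝ → ℝ) (hτ : Continuous τ)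
    (r : ℝ) (hr : 0 ≤ r) (x : ℝ)
    (hz : ∀ φ ∈ Set.Icc (0:ℝ) (2*Real.pi/n),
        ‖zf n q k x ((r:ℂ) * Complex.exp (Complex.I * φ))‖ ≤ 1)
    (hu : ∀ φ ∈ Set.Icc (0:ℝ) (2*Real.pi/n), ∀ ξ ∈ Set.Icc (0:ℝ) 1,
        ‖uf n q m ξ ((r:ℂ) * Complex.exp (Complex.I * φ))‖ ≤ Real.exp (r * c * (τ ξ - 1))) :
    ‖contour n r (fun ρ => zf n q k x ρ * ∫ ξ in (0:ℝ)..1, f ξ * uf n q m ξ ρ)‖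
      ≤ (2*Real.pi/n) * (r * ∫ ξ in (0:ℝ)..1, ‖f ξ‖ * Real.exp (r * c * (τ ξ - 1))) := by
  have hn0' : 0 < (n:ℝ) := by exact_mod_cast hn0
  have hπn : 0 < 2*π/n := by positivity
  set B := ∫ ξ in (0:ℝ)..1, ‖f ξ‖ * Real.exp (r * c * (τ ξ - 1)) with hBdef
  have hBint : IntervalIntegrable (fun ξ => ‖f ξ‖ * Real.exp (r * c * (τ ξ - 1))) volume 0 1 := by
    apply ContinuousOn.intervalIntegrable
    rw [Set.uIcc_of_le (by norm_num : (0:ℝ) ≤ 1)]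
    exact hfcont.norm.mul (Continuous.continuousOn (by fun_prop))
  have hB0 : 0 ≤ B := by
    apply intervalIntegral.integral_nonneg (by norm_num)
    intro u _
    exact mul_nonneg (norm_nonneg _) (Real.exp_pos _).le
  have hinner : ∀ φ ∈ Set.Icc (0:ℝ) (2*π/n),
      ‖∫ ξ in (0:ℝ)..1, f ξ * uf n q m ξ ((r:ℂ) * Complex.exp (Complex.I * φ))‖ ≤ B := by
    intro φ hφ
    have hpt : ∀ ξ ∈ Set.uIoc (0:ℝ) 1,
        ‖f ξ * uf n q m ξ ((r:ℂ) * Complex.exp (Complex.I * φ))‖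
          ≤ ‖f ξ‖ * Real.exp (r * c * (τ ξ - 1)) := by
      intro ξ hξ
      rw [Set.uIoc_of_le (by norm_num : (0:ℝ) ≤ 1)] at hξ
      rw [norm_mul]
      exact mul_le_mul_of_nonneg_left (hu φ hφ ξ ⟨hξ.1.le, hξ.2⟩) (norm_nonneg _)
    have := intervalIntegral.norm_integral_le_of_norm_le (by norm_num)
      (Filter.Eventually.of_forall fun ξ hξ =>
        hpt ξ (by rw [Set.uIoc_of_le (by norm_num : (0:ℝ) ≤ 1)]; exact hξ)) hBint
    exact this
  have hmain := intervalIntegral.norm_integral_le_of_norm_le_const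
    (C := r * B) (a := 0) (b := 2*π/n)
    (f := fun φ => (fun ρ => zf n q k x ρ * ∫ ξ in (0:ℝ)..1, f ξ * uf n q m ξ ρ)
        ((r:ℂ) * Complex.exp (Complex.I * φ)) * (Complex.I * r * Complex.exp (Complex.I * φ))) ?_
  · rw [contour]
    calc ‖∫ φ in (0:ℝ)..(2*π/n), _‖ ≤ r * B * |2*π/n - 0| := hmain
      _ = (2*π/n) * (r * B) := by rw [sub_zero, abs_of_pos hπn]; ring
  · intro φ hφ
    rw [Set.uIoc_of_le hπn.le] at hφ
    have hφ' : φ ∈ Set.Icc (0:ℝ) (2*π/n) := ⟨hφ.1.le, hφ.2⟩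
    rw [norm_mul, norm_mul]
    have h3 : ‖Complex.I * (r:ℂ) * Complex.exp (Complex.I * φ)‖ = r := by
      rw [norm_mul, norm_mul, Complex.norm_I, Complex.norm_exp]
      simp [Complex.mul_re, abs_of_nonneg hr]
    rw [h3]
    calc ‖zf n q k x _‖ * ‖∫ ξ in (0:ℝ)..1, f ξ * uf n q m ξ _‖ * r
        ≤ 1 * B * r := by
          apply mul_le_mul_of_nonneg_right _ hr
          exact mul_le_mul (hz φ hφ') (hinner φ hφ') (norm_nonneg _) (by norm_num)
      _ = r * B := by ring

lemma rexp_decay (a M : ℝ) (ha : 0 < a) :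
    Tendsto (fun r : ℝ => M * (r * Real.exp (-(a * r)))) atTop (nhds 0) := by
  have h1 : Tendsto (fun r : ℝ => a * r) atTop atTop :=
    tendsto_id.const_mul_atTop ha
  have h2 := (Real.tendsto_pow_mul_exp_neg_atTop_nhds_zero 1).comp h1
  have h3 := h2.const_mul (M / a)
  rw [mul_zero] at h3
  convert h3 using 2 with r
  simp only [Function.comp_apply, pow_one]
  field_simp

lemma keyA (c : ℝ) (hc : 0 < c) (g : ℝ → ℝ)
    (hg : ContinuousOn g (Set.Icc 0 1))
    (hgpos : ∀ ξ ∈ Set.Icc (0:ℝ) 1, 0 ≤ g ξ) (hg1 : g 1 = 0) :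
    Tendsto (fun r : ℝ => r * ∫ ξ in (0:ℝ)..1, g ξ * Real.exp (r * c * (ξ - 1)))
      atTop (nhds 0) := by
  rw [Metric.tendsto_atTop]
  intro ε hε
  -- bound for g
  obtain ⟨M, hM⟩ := isCompact_Icc.exists_bound_of_continuousOn hg
  have hM0 : 0 ≤ M := le_trans (norm_nonneg _) (hM 1 ⟨by norm_num, le_refl _⟩)
  -- continuity at 1
  have hcw : ContinuousWithinAt g (Set.Icc 0 1) 1 := hg 1 ⟨by norm_num, le_refl _⟩
  rw [Metric.continuousWithinAt_iff] at hcw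
  obtain ⟨δ0, hδ0, hδ⟩ := hcw (ε * c / 4) (by positivity)
  set δ : ℝ := min (δ0 / 2) 1 with hδdef
  have hδpos : 0 < δ := lt_min (by linarith) one_pos
  have hδ1 : δ ≤ 1 := min_le_right _ _
  have hδlt : δ < δ0 := lt_of_le_of_lt (min_le_left _ _) (by linarith)
  -- small values near 1
  have hsmall : ∀ ξ ∈ Set.Icc (1 - δ) 1, g ξ ≤ ε * c / 4 := by
    intro ξ hξ
    have hξI : ξ ∈ Set.Icc (0:ℝ) 1 := ⟨by cases hξ; linarith, hξ.2⟩
    have := hδ hξI (by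
      rw [Real.dist_eq]
      have : |ξ - 1| ≤ δ := abs_le.mpr ⟨by cases hξ; linarith, by cases hξ; linarith⟩
      linarith)
    rw [hg1, Real.dist_eq, sub_zero] at this
    exact le_of_lt (lt_of_le_of_lt (le_abs_self _) this)
  -- choose N
  obtain ⟨N0, hN0⟩ := (Metric.tendsto_atTop.mp (rexp_decay (c * δ) M (by positivity))) (ε / 4) (by linarith)
  refine ⟨max N0 1, fun r hr => ?_⟩
  have hr1 : (1:ℝ) ≤ r := le_trans (le_max_right _ _) hr
  have hr0 : 0 < r := lt_of_lt_of_le one_pos hr1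
  have hrc : 0 < r * c := by positivity
  -- integrability
  have hcont : ContinuousOn (fun ξ => g ξ * Real.exp (r * c * (ξ - 1))) (Set.Icc 0 1) :=
    hg.mul (Continuous.continuousOn (by fun_prop))
  have hint1 : IntervalIntegrable (fun ξ => g ξ * Real.exp (r * c * (ξ - 1))) volume 0 (1 - δ) :=
    (hcont.mono (by rw [Set.uIcc_of_le (by linarith)]; intro x hx; exact ⟨hx.1, by cases hx; linarith⟩)).intervalIntegrable
  have hint2 : IntervalIntegrable (fun ξ => g ξ * Real.exp (r * c * (ξ - 1))) volume (1 - δ) 1 :=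
    (hcont.mono (by rw [Set.uIcc_of_le (by linarith)]; intro x hx; exact ⟨by cases hx; linarith, hx.2⟩)).intervalIntegrable
  -- split
  have hsplit : (∫ ξ in (0:ℝ)..1, g ξ * Real.exp (r * c * (ξ - 1)))
      = (∫ ξ in (0:ℝ)..(1-δ), g ξ * Real.exp (r * c * (ξ - 1)))
        + ∫ ξ in (1-δ:ℝ)..1, g ξ * Real.exp (r * c * (ξ - 1)) :=
    (intervalIntegral.integral_add_adjacent_intervals hint1 hint2).symm
  -- bound piece 1
  have hb1 : (∫ ξ in (0:ℝ)..(1-δ), g ξ * Real.exp (r * c * (ξ - 1)))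
      ≤ M * Real.exp (-(r * c * δ)) := by
    have := intervalIntegral.norm_integral_le_of_norm_le_const
      (C := M * Real.exp (-(r * c * δ))) (a := 0) (b := 1 - δ)
      (f := fun ξ => g ξ * Real.exp (r * c * (ξ - 1))) ?_
    · calc (∫ ξ in (0:ℝ)..(1-δ), g ξ * Real.exp (r * c * (ξ - 1)))
          ≤ ‖∫ ξ in (0:ℝ)..(1-δ), g ξ * Real.exp (r * c * (ξ - 1))‖ := le_abs_self _
        _ ≤ M * Real.exp (-(r * c * δ)) * |1 - δ - 0| := this
        _ ≤ M * Real.exp (-(r * c * δ)) * 1 := by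
            apply mul_le_mul_of_nonneg_left _ (by positivity)
            rw [abs_of_nonneg (by linarith)]; linarith
        _ = M * Real.exp (-(r * c * δ)) := mul_one _
    · intro x hx
      rw [Set.uIoc_of_le (by linarith)] at hx
      have hx1 : x ∈ Set.Icc (0:ℝ) 1 := ⟨le_of_lt hx.1, by cases hx; linarith⟩
      rw [norm_mul, Real.norm_eq_abs (Real.exp _), abs_of_pos (Real.exp_pos _)]
      apply mul_le_mul (hM x hx1) _ (le_of_lt (Real.exp_pos _)) hM0
      apply Real.exp_le_exp.mpr
      have : x - 1 ≤ -δ := by cases hx; linarith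
      nlinarith
  -- bound piece 2
  have hexpint : (∫ ξ in (1-δ:ℝ)..1, Real.exp (r * c * (ξ - 1))) ≤ 1 / (r * c) := by
    have hd : ∀ x ∈ Set.uIcc (1-δ:ℝ) 1, HasDerivAt (fun ξ => Real.exp (r * c * (ξ - 1)) / (r * c))
        (Real.exp (r * c * (x - 1))) x := by
      intro x _
      have h1 : HasDerivAt (fun ξ : ℝ => r * c * (ξ - 1)) (r * c) x := by
        simpa using ((hasDerivAt_id x).sub_const 1).const_mul (r * c)
      have h2 := (h1.exp).div_const (r * c)
      simpa [mul_div_assoc, mul_div_cancel_right₀ _ (ne_of_gt hrc)] using h2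
    rw [intervalIntegral.integral_eq_sub_of_hasDerivAt hd
      ((by fun_prop : Continuous fun ξ : ℝ => Real.exp (r * c * (ξ - 1))).intervalIntegrable _ _)]
    simp only [sub_self, mul_zero, Real.exp_zero]
    have : 0 < Real.exp (r * c * (1 - δ - 1)) / (r * c) := by positivity
    have h1c : (1:ℝ)/(r*c) - Real.exp (r * c * (1 - δ - 1)) / (r * c) ≤ 1/(r*c) := by linarith
    linarith
  -- bound piece 2 full
  have hb2 : (∫ ξ in (1-δ:ℝ)..1, g ξ * Real.exp (r * c * (ξ - 1)))
      ≤ (ε * c / 4) * (1 / (r * c)) := by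
    have hintc : IntervalIntegrable (fun ξ : ℝ => (ε * c / 4) * Real.exp (r * c * (ξ - 1))) volume (1-δ) 1 :=
      (by fun_prop : Continuous fun ξ : ℝ => (ε * c / 4) * Real.exp (r * c * (ξ - 1))).intervalIntegrable _ _
    calc (∫ ξ in (1-δ:ℝ)..1, g ξ * Real.exp (r * c * (ξ - 1)))
        ≤ ∫ ξ in (1-δ:ℝ)..1, (ε * c / 4) * Real.exp (r * c * (ξ - 1)) := by
          apply intervalIntegral.integral_mono_on (by linarith) hint2 hintc
          intro x hx
          exact mul_le_mul_of_nonneg_right (hsmall x hx) (Real.exp_pos _).le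
      _ = (ε * c / 4) * ∫ ξ in (1-δ:ℝ)..1, Real.exp (r * c * (ξ - 1)) := by
          rw [intervalIntegral.integral_const_mul]
      _ ≤ (ε * c / 4) * (1 / (r * c)) := by
          apply mul_le_mul_of_nonneg_left hexpint (by positivity)
  have hIpos : 0 ≤ ∫ ξ in (0:ℝ)..1, g ξ * Real.exp (r * c * (ξ - 1)) := by
    apply intervalIntegral.integral_nonneg (by norm_num)
    intro u hu
    exact mul_nonneg (hgpos u hu) (Real.exp_pos _).le
  have habs := hN0 r (le_trans (le_max_left _ _) hr)
  rw [Real.dist_eq, sub_zero] at habs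
  have hterm1 : M * (r * Real.exp (-(c * δ * r))) < ε / 4 :=
    lt_of_le_of_lt (le_abs_self _) habs
  have hkey : r * (∫ ξ in (0:ℝ)..1, g ξ * Real.exp (r * c * (ξ - 1)))
      ≤ M * (r * Real.exp (-(c * δ * r))) + ε / 4 := by
    rw [hsplit, mul_add]
    apply add_le_add
    · calc r * (∫ ξ in (0:ℝ)..(1-δ), g ξ * Real.exp (r * c * (ξ - 1)))
          ≤ r * (M * Real.exp (-(r * c * δ))) := mul_le_mul_of_nonneg_left hb1 hr0.le
        _ = M * (r * Real.exp (-(c * δ * r))) := by rw [show -(r*c*δ) = -(c*δ*r) by ring]; ring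
    · calc r * (∫ ξ in (1-δ:ℝ)..1, g ξ * Real.exp (r * c * (ξ - 1)))
          ≤ r * ((ε * c / 4) * (1 / (r * c))) := mul_le_mul_of_nonneg_left hb2 hr0.le
        _ = ε / 4 := by field_simp
  rw [Real.dist_eq, sub_zero, abs_of_nonneg (mul_nonneg hr0.le hIpos)]
  linarith



/-- **Lemma 2.2 (vanishing of intermediate-index terms).** For `m ∉ {0, q−1, q, n−1}` and
`f ∈ C₀(0,1)`, `sup_{x∈[0,1]} |∫_{Γ_r} z_k(x,ρ)(∫₀¹ f(ξ)u_m(ξ,ρ) dξ) dρ| → 0` as `r → ∞`. -/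
theorem intermediate_terms_vanish
    (n q : ℕ) (hn : n = 2 * q) (hq : 1 ≤ q)
    (k m : Fin n) (hm : (m : ℕ) ∉ ({0, q - 1, q, n - 1} : Set ℕ))
    (f : ℝ → ℂ)
    (hfcont : ContinuousOn f (Set.Icc 0 1))
    (hf0 : f 0 = 0) (hf1 : f 1 = 0) :
    Tendsto (fun r : ℝ =>
        supOn (Set.Icc 0 1) fun x =>
          contour n r fun ρ => zf n q k x ρ * ∫ ξ in (0:ℝ)..1, f ξ * uf n q m ξ ρ)
      atTop (nhds 0) := by
  simp only [Set.mem_insert_iff, Set.mem_singleton_iff, not_or] at hm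
  obtain ⟨hm0, hmq1, hmq, hmn1⟩ := hm
  have hmlt' : (m:ℕ) < n := m.isLt
  have hn0 : 0 < n := by omega
  have hn0' : 0 < (n:ℝ) := by exact_mod_cast hn0
  have hπn : 0 < 2*π/n := by positivity
  set c : ℝ := Real.sin (2*π/n) with hcdef
  have hq3 : 3 ≤ q := by rcases lt_or_ge (m:ℕ) q with h | h <;> omega
  have haq : (q:ℝ) * (2*π/n) = π := by
    subst hn; push_cast; field_simp
  have hq3' : (3:ℝ) ≤ q := by exact_mod_cast hq3
  have hc : 0 < c := by
    apply Real.sin_pos_of_pos_of_lt_pi hπn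
    nlinarith [Real.pi_pos]
  haveI : Nonempty (Set.Icc (0:ℝ) 1) := ⟨⟨0, by norm_num⟩⟩
  -- choose τ per case
  rcases lt_or_ge (m:ℕ) q with hmlt | hmge
  · -- m < q : τ = id
    have hm1 : 1 ≤ (m:ℕ) := by omega
    have hm2 : (m:ℕ) + 2 ≤ q := by omega
    apply squeeze_zero' (g := fun r : ℝ =>
      (2*π/n) * (r * ∫ ξ in (0:ℝ)..1, ‖f ξ‖ * Real.exp (r * c * (ξ - 1))))
    · exact Filter.Eventually.of_forall fun r => iSup_nonneg fun _ => norm_nonneg _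
    · filter_upwards [Filter.eventually_ge_atTop (0:ℝ)] with r hr
      apply ciSup_le
      rintro ⟨x, hx⟩
      exact contour_norm_le n q hn0 k m f hfcont c (fun ξ => ξ) continuous_id r hr x
        (fun φ hφ => zf_bound n q hn hq k x hx r φ hr hφ)
        (fun φ hφ ξ hξ => uf_bound_lt n q hn m hmlt hm1 hm2 ξ hξ r φ hr hφ)
    · have h := (keyA c hc (fun ξ => ‖f ξ‖) hfcont.norm
        (fun ξ _ => norm_nonneg _) (by simp [hf1])).const_mul (2*π/n)
      rwa [mul_zero] at h
  · -- m ≥ q : τ ξ = 1 - ξ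
    have hm1 : q + 1 ≤ (m:ℕ) := by omega
    have hm2 : (m:ℕ) + 2 ≤ n := by omega
    apply squeeze_zero' (g := fun r : ℝ =>
      (2*π/n) * (r * ∫ ξ in (0:ℝ)..1, ‖f ξ‖ * Real.exp (r * c * ((1 - ξ) - 1))))
    · exact Filter.Eventually.of_forall fun r => iSup_nonneg fun _ => norm_nonneg _
    · filter_upwards [Filter.eventually_ge_atTop (0:ℝ)] with r hr
      apply ciSup_le
      rintro ⟨x, hx⟩
      exact contour_norm_le n q hn0 k m f hfcont c (fun ξ => 1 - ξ) (by fun_prop) r hr x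
        (fun φ hφ => zf_bound n q hn hq k x hx r φ hr hφ)
        (fun φ hφ ξ hξ => uf_bound_ge n q hn m (not_lt.mpr hmge) hm1 hm2 ξ hξ r φ hr hφ)
    · -- change variables ξ ↦ 1 - ξ
      have hrw : ∀ r : ℝ, (∫ ξ in (0:ℝ)..1, ‖f ξ‖ * Real.exp (r * c * ((1 - ξ) - 1)))
          = ∫ ξ in (0:ℝ)..1, ‖f (1 - ξ)‖ * Real.exp (r * c * (ξ - 1)) := by
        intro r
        have := intervalIntegral.integral_comp_sub_left
          (fun ξ => ‖f (1 - ξ)‖ * Real.exp (r * c * (ξ - 1))) 1 (a := 0) (b := 1)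
        rw [show (1:ℝ) - 1 = 0 by norm_num, show (1:ℝ) - 0 = 1 by norm_num] at this
        rw [← this]
        congr 1 with ξ
        rw [sub_sub_cancel]
      have hgcont : ContinuousOn (fun ξ : ℝ => ‖f (1 - ξ)‖) (Set.Icc 0 1) := by
        apply ContinuousOn.norm
        apply hfcont.comp (Continuous.continuousOn (by fun_prop))
        intro ξ hξ
        exact ⟨by linarith [hξ.2], by linarith [hξ.1]⟩
      have h := (keyA c hc (fun ξ => ‖f (1 - ξ)‖) hgcont
        (fun ξ _ => norm_nonneg _) (by norm_num [hf0])).const_mul (2*π/n)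
      rw [mul_zero] at h
      convert h using 2 with r
      rw [hrw r]

end Equi
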